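/- arXiv:2604.11335 — 2 statements merged into one kernel-verified Lean document; each statement's English description precedes it below -/
import Mathlib

section
/- For every (u,v) ∈ [0,T]² and every 1 ≤ j ≤ m with jnh ≤ n, | Σ_{i∈I_j} ( R(u,v;i/n) − R(u,v;s_j) ) | ≤ C·(h/2 + n·h³/4); in particular, if n·h² ≥ 1/2 this bound is at most 2C·n·h³. (Deterministic core of Proposition 3.2 of the paper.) -/
theorem gauss_real (N : ℕ) : (∑ k ∈ Finset.range N, (k:ℝ)) = N*(N-1)/2 := by
  induction N with
  | zero => simp
  | succ m ih => rw [Finset.sum_range_succ, ih]; push_cast; ring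

/-- deterministic core of Proposition 3.2 of the paper.
If `R(u,v;·)` admits the first-order Taylor bound with constant `C`
(`|R'| ≤ C` and `|R(u,v;t) − R(u,v;s) − (t−s) R'(u,v;s)| ≤ C (t−s)²`),
then the block sum of deviations from the midpoint value satisfies
`|Σ_{i∈I_j} (R(u,v;i/n) − R(u,v;s_j))| ≤ C (h/2 + n h³/4)`,
and if moreover `n h² ≥ 1/2` this is at most `2 C n h³`. -/
theorem stmt_6 (T : ℝ) (hT : 0 < T) (R R' : ℝ → ℝ → ℝ → ℝ) (C : ℝ) (hC : 0 ≤ C)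
    (hR'bd : ∀ u ∈ Set.Icc (0:ℝ) T, ∀ v ∈ Set.Icc (0:ℝ) T, ∀ s ∈ Set.Icc (0:ℝ) 1,
      |R' u v s| ≤ C)
    (hTaylor : ∀ u ∈ Set.Icc (0:ℝ) T, ∀ v ∈ Set.Icc (0:ℝ) T,
      ∀ s ∈ Set.Icc (0:ℝ) 1, ∀ t ∈ Set.Icc (0:ℝ) 1,
      |R u v t - R u v s - (t - s) * R' u v s| ≤ C * (t - s)^2)
    (n N : ℕ) (hn : 0 < n) (hN : 0 < N)
    (h : ℝ) (hh : h = (N : ℝ) / n)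
    (j : ℕ) (hj : 1 ≤ j) (hjn : j * N ≤ n)
    (sj : ℝ) (hsj : sj = ((j : ℝ) - 1/2) * h)
    (u v : ℝ) (hu : u ∈ Set.Icc (0:ℝ) T) (hv : v ∈ Set.Icc (0:ℝ) T) :
    |∑ i ∈ Finset.Ioc ((j-1)*N) (j*N), (R u v ((i : ℝ)/n) - R u v sj)|
        ≤ C * (h/2 + n * h^3/4) ∧
    ((1:ℝ)/2 ≤ n * h^2 →
      |∑ i ∈ Finset.Ioc ((j-1)*N) (j*N), (R u v ((i : ℝ)/n) - R u v sj)|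
        ≤ 2 * C * n * h^3) := by
  obtain ⟨j', rfl⟩ : ∃ j', j = j' + 1 := ⟨j - 1, by omega⟩
  have hn' : (0:ℝ) < n := by exact_mod_cast hn
  have hN' : (0:ℝ) < N := by exact_mod_cast hN
  have hh0 : 0 < h := by rw [hh]; positivity
  set a := j' * N with ha
  have haN : (j' + 1) * N = a + N := by rw [ha]; ring
  have hra : Finset.Ioc ((j'+1-1)*N) ((j'+1)*N) = Finset.Ico (a+1) (a+1+N) := by
    simp only [Nat.add_sub_cancel, haN, ← ha]
    ext x
    simp only [Finset.mem_Ioc, Finset.mem_Ico]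
    omega
  have hsum : ∑ i ∈ Finset.Ioc ((j'+1-1)*N) ((j'+1)*N), (R u v ((i : ℝ)/n) - R u v sj)
      = ∑ k ∈ Finset.range N, (R u v (((a:ℝ)+1+k)/n) - R u v sj) := by
    rw [hra, Finset.sum_Ico_eq_sum_range,
      show a + 1 + N - (a + 1) = N from by omega]
    refine Finset.sum_congr rfl fun k _ => ?_
    congr 2
    push_cast; ring
  -- the deviation of grid point from midpoint
  set D : ℕ → ℝ := fun k => ((a:ℝ)+1+k)/n - sj with hD
  have hDk : ∀ k : ℕ, D k = ((1:ℝ) + k - (N:ℝ)/2)/n := by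
    intro k
    rw [hD]
    simp only
    rw [hsj, hh, ha]
    push_cast
    field_simp
    ring
  have hgauss : (∑ k ∈ Finset.range N, (k:ℝ)) = N*(N-1)/2 := gauss_real N
  have hsumD : ∑ k ∈ Finset.range N, D k = h/2 := by
    have : ∀ k ∈ Finset.range N, D k = ((1:ℝ) - (N:ℝ)/2)/n + (k:ℝ)/n := by
      intro k _; rw [hDk]; ring
    rw [Finset.sum_congr rfl this, Finset.sum_add_distrib, Finset.sum_const, Finset.card_range, nsmul_eq_mul,
      ← Finset.sum_div, hgauss, hh]
    field_simp
    ring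
  have hDbd : ∀ k ∈ Finset.range N, |D k| ≤ h/2 := by
    intro k hk
    have hk' : (k:ℝ) + 1 ≤ N := by
      have := Finset.mem_range.mp hk
      exact_mod_cast Nat.succ_le_of_lt this
    have hk0 : (0:ℝ) ≤ k := Nat.cast_nonneg k
    rw [hDk, show h/2 = ((N:ℝ)/2)/n from by rw [hh]; ring, abs_div,
      abs_of_pos hn', div_le_div_iff_of_pos_right hn', abs_le]
    constructor <;> linarith
  -- midpoint and grid points are in [0,1]
  have hjn' : ((j':ℝ)+1) * N ≤ n := by exact_mod_cast hjn
  have hsj' : sj = (((j':ℝ)+1-1/2)*N)/n := by rw [hsj, hh]; push_cast; ring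
  have hsjmem : sj ∈ Set.Icc (0:ℝ) 1 := by
    have hj0 : (0:ℝ) ≤ j' := Nat.cast_nonneg j'
    constructor
    · rw [hsj']; apply div_nonneg _ hn'.le; nlinarith
    · rw [hsj', div_le_one hn']; nlinarith
  have htmem : ∀ k ∈ Finset.range N, ((a:ℝ)+1+k)/n ∈ Set.Icc (0:ℝ) 1 := by
    intro k hk
    constructor
    · positivity
    · rw [div_le_one hn']
      have : a + 1 + k ≤ n := by
        have := Finset.mem_range.mp hk
        calc a + 1 + k ≤ a + N := by omega
        _ = (j'+1) * N := haN.symm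
        _ ≤ n := hjn
      exact_mod_cast this
  -- Taylor error bound
  have hE : ∀ k ∈ Finset.range N,
      |R u v (((a:ℝ)+1+k)/n) - R u v sj - D k * R' u v sj| ≤ C * (h/2)^2 := by
    intro k hk
    have h1 := hTaylor u hu v hv sj hsjmem (((a:ℝ)+1+k)/n) (htmem k hk)
    have h2 : (((a:ℝ)+1+k)/n - sj)^2 ≤ (h/2)^2 := by
      rw [← sq_abs]
      have := hDbd k hk
      rw [hD] at this
      exact pow_le_pow_left₀ (abs_nonneg _) this 2
    calc |R u v (((a:ℝ)+1+k)/n) - R u v sj - D k * R' u v sj|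
        = |R u v (((a:ℝ)+1+k)/n) - R u v sj - (((a:ℝ)+1+k)/n - sj) * R' u v sj| := by rw [hD]
      _ ≤ C * (((a:ℝ)+1+k)/n - sj)^2 := h1
      _ ≤ C * (h/2)^2 := by exact mul_le_mul_of_nonneg_left h2 hC
  -- decompose the sum
  have split : (∑ k ∈ Finset.range N, (R u v (((a:ℝ)+1+k)/n) - R u v sj))
      = (∑ k ∈ Finset.range N, D k) * R' u v sj
        + ∑ k ∈ Finset.range N, (R u v (((a:ℝ)+1+k)/n) - R u v sj - D k * R' u v sj) := by
    rw [Finset.sum_mul, ← Finset.sum_add_distrib]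
    refine Finset.sum_congr rfl fun k _ => by ring
  have hR' : |R' u v sj| ≤ C := hR'bd u hu v hv sj hsjmem
  have main : |∑ k ∈ Finset.range N, (R u v (((a:ℝ)+1+k)/n) - R u v sj)|
      ≤ C * (h/2) + N * (C * (h/2)^2) := by
    rw [split]
    calc |(∑ k ∈ Finset.range N, D k) * R' u v sj
        + ∑ k ∈ Finset.range N, (R u v (((a:ℝ)+1+k)/n) - R u v sj - D k * R' u v sj)|
        ≤ |(∑ k ∈ Finset.range N, D k) * R' u v sj|
          + |∑ k ∈ Finset.range N, (R u v (((a:ℝ)+1+k)/n) - R u v sj - D k * R' u v sj)| :=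
        abs_add_le _ _
      _ ≤ (h/2) * C + N * (C * (h/2)^2) := by
        gcongr
        · rw [abs_mul, hsumD, abs_of_pos (by positivity : (0:ℝ) < h/2)]
          exact mul_le_mul_of_nonneg_left hR' (by positivity)
        · calc |∑ k ∈ Finset.range N, (R u v (((a:ℝ)+1+k)/n) - R u v sj - D k * R' u v sj)|
              ≤ ∑ k ∈ Finset.range N, |R u v (((a:ℝ)+1+k)/n) - R u v sj - D k * R' u v sj| :=
              Finset.abs_sum_le_sum_abs _ _
            _ ≤ ∑ _k ∈ Finset.range N, C * (h/2)^2 := Finset.sum_le_sum hE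
            _ = N * (C * (h/2)^2) := by rw [Finset.sum_const]; simp [mul_comm]
      _ = C * (h/2) + N * (C * (h/2)^2) := by ring
  have hval : C * (h/2) + (N:ℝ) * (C * (h/2)^2) = C * (h/2 + n * h^3/4) := by
    rw [hh]; field_simp; ring
  have part1 : |∑ i ∈ Finset.Ioc ((j'+1-1)*N) ((j'+1)*N), (R u v ((i : ℝ)/n) - R u v sj)|
      ≤ C * (h/2 + n * h^3/4) := by
    rw [hsum, ← hval]; exact main
  refine ⟨part1, fun hnh => ?_⟩
  have key : C * (h/2 + n * h^3/4) ≤ 2 * C * n * h^3 := by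
    have h1 : h/2 ≤ n * h^3 := by
      calc h/2 = h * (1/2) := by ring
        _ ≤ h * (n * h^2) := mul_le_mul_of_nonneg_left hnh hh0.le
        _ = n * h^3 := by ring
    have h2 : (n:ℝ) * h^3/4 ≤ n * h^3 := by
      linarith [mul_pos hn' (pow_pos hh0 3)]
    calc C * (h/2 + n * h^3/4) ≤ C * (n * h^3 + n * h^3) :=
        mul_le_mul_of_nonneg_left (by linarith) hC
      _ = 2 * C * n * h^3 := by ring
  exact part1.trans key
end

section
/- Let N be a positive integer, u₁,…,u_N ∈ ℝ, and let H₁,…,H_N : ℝ → ℝ be non-increasing functions; set H̲(x) = min_{1≤i≤N} H_i(x), H̄(x) = max_{1≤i≤N} H_i(x), and x_i = H_i(u_i) for each i. For an integer 0 ≤ r < N, let u_{(r+1)} denote the (r+1)-th smallest value among u₁,…,u_N and x_{(N−r)} the (N−r)-th smallest value among x₁,…,x_N. Then H̲(u_{(r+1)}) ≤ x_{(N−r)} ≤ H̄(u_{(r+1)}). -/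
open scoped Classical in
/-- The `r`-th smallest value among `{x i : i ∈ I}` (for `1 ≤ r ≤ |I|`),
defined as `inf {t : #{i ∈ I : x i ≤ t} ≥ r}`. -/
noncomputable def orderStat {ι : Type*} (I : Finset ι) (x : ι → ℝ) (r : ℕ) : ℝ :=
  sInf {t : ℝ | r ≤ (I.filter fun i => x i ≤ t).card}

open Finset in
open scoped Classical in
lemma orderStat_set_nonempty {N : ℕ} (x : Fin N → ℝ) (k : ℕ) (hkN : k ≤ N) :
    {t : ℝ | k ≤ (Finset.univ.filter fun i => x i ≤ t).card}.Nonempty := by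
  obtain ⟨t, ht⟩ := Finite.exists_le x
  refine ⟨t, ?_⟩
  have : (Finset.univ.filter fun i => x i ≤ t) = Finset.univ :=
    Finset.filter_true_of_mem fun i _ => ht i
  simp [Set.mem_setOf_eq, this, hkN]

open Finset in
open scoped Classical in
lemma orderStat_bddBelow {N : ℕ} (hN : 0 < N) (x : Fin N → ℝ) (k : ℕ) (hk : 1 ≤ k) :
    BddBelow {t : ℝ | k ≤ (Finset.univ.filter fun i => x i ≤ t).card} := by
  have : Nonempty (Fin N) := ⟨⟨0, hN⟩⟩
  refine ⟨⨅ i, x i, fun t ht => ?_⟩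
  have hcard : 1 ≤ (Finset.univ.filter fun i => x i ≤ t).card := le_trans hk ht
  obtain ⟨i, hi⟩ := Finset.card_pos.mp hcard
  have hxi : x i ≤ t := (Finset.mem_filter.mp hi).2
  exact le_trans (ciInf_le (Finite.bddBelow_range x) i) hxi

open Finset in
open scoped Classical in
lemma orderStat_count {N : ℕ} (hN : 0 < N) (x : Fin N → ℝ) (k : ℕ) (hk : 1 ≤ k) (hkN : k ≤ N) :
    k ≤ (Finset.univ.filter fun i => x i ≤ orderStat Finset.univ x k).card := by
  set c := orderStat Finset.univ x k with hc
  by_contra hlt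
  push_neg at hlt
  set A := (Finset.univ.filter fun i : Fin N => c < x i) with hA
  have hAcard : 0 < A.card := by
    have : (Finset.univ.filter fun i : Fin N => x i ≤ c).card
        + A.card = N := by
      rw [hA]
      have := Finset.card_filter_add_card_filter_not
        (s := (Finset.univ : Finset (Fin N))) (p := fun i => x i ≤ c)
      simpa [not_le, Finset.card_fin] using this
    omega
  obtain ⟨iA, hiA⟩ := Finset.card_pos.mp hAcard
  have hAne : A.Nonempty := ⟨iA, hiA⟩
  set m := A.inf' hAne x with hm
  have hcm : c < m := by
    rw [hm]
    rw [Finset.lt_inf'_iff]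
    intro i hi
    exact (Finset.mem_filter.mp hi).2
  have hmlb : ∀ t ∈ {t : ℝ | k ≤ (Finset.univ.filter fun i => x i ≤ t).card}, m ≤ t := by
    intro t ht
    have hct : c ≤ t := csInf_le (orderStat_bddBelow hN x k hk) ht
    have hsub : (Finset.univ.filter fun i => x i ≤ c) ⊆ (Finset.univ.filter fun i => x i ≤ t) :=
      Finset.monotone_filter_right _ fun i _ hi => le_trans hi hct
    have hex : ∃ i, x i ≤ t ∧ c < x i := by
      by_contra hno
      push_neg at hno
      have : (Finset.univ.filter fun i => x i ≤ t) ⊆ (Finset.univ.filter fun i => x i ≤ c) := by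
        intro i hi
        rw [Finset.mem_filter] at hi ⊢
        exact ⟨hi.1, hno i hi.2⟩
      have := Finset.card_le_card this
      have hkt : k ≤ (Finset.univ.filter fun i => x i ≤ t).card := ht
      omega
    obtain ⟨i, hit, hic⟩ := hex
    have hiA : i ∈ A := Finset.mem_filter.mpr ⟨Finset.mem_univ i, hic⟩
    exact le_trans (Finset.inf'_le x hiA) hit
  have : m ≤ c := le_csInf (orderStat_set_nonempty x k hkN) hmlb
  linarith

open Finset in
open scoped Classical in
lemma count_lt_orderStat {N : ℕ} (hN : 0 < N) (x : Fin N → ℝ) (k : ℕ) (hk : 1 ≤ k) (hkN : k ≤ N) :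
    (Finset.univ.filter fun i => x i < orderStat Finset.univ x k).card < k := by
  set c := orderStat Finset.univ x k with hc
  by_contra hge
  push_neg at hge
  set B := (Finset.univ.filter fun i : Fin N => x i < c) with hB
  have hBne : B.Nonempty := Finset.card_pos.mp (lt_of_lt_of_le hk hge)
  set t₀ := B.sup' hBne x with ht₀
  have ht₀c : t₀ < c := by
    rw [ht₀, Finset.sup'_lt_iff]
    intro i hi
    exact (Finset.mem_filter.mp hi).2
  have hmem : t₀ ∈ {t : ℝ | k ≤ (Finset.univ.filter fun i => x i ≤ t).card} := by
    refine le_trans hge (Finset.card_le_card ?_)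
    intro i hi
    rw [Finset.mem_filter]
    exact ⟨Finset.mem_univ i, Finset.le_sup' x hi⟩
  have := csInf_le (orderStat_bddBelow hN x k hk) hmem
  have hc' : c ≤ t₀ := this
  linarith

/-- order-statistic sandwich under non-increasing transformations:
with `x_i = H_i(u_i)` for non-increasing `H_i`, `H̲ = min_i H_i`, `H̄ = max_i H_i`,
one has `H̲(u_{(r+1)}) ≤ x_{(N−r)} ≤ H̄(u_{(r+1)})` for `0 ≤ r < N`. -/
theorem stmt_12 (N : ℕ) (hN : 0 < N) (u : Fin N → ℝ) (H : Fin N → ℝ → ℝ)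
    (hH : ∀ i, Antitone (H i)) (x : Fin N → ℝ) (hx : ∀ i, x i = H i (u i))
    (r : ℕ) (hr : r < N) :
    (⨅ i, H i (orderStat Finset.univ u (r + 1))) ≤ orderStat Finset.univ x (N - r) ∧
    orderStat Finset.univ x (N - r) ≤ ⨆ i, H i (orderStat Finset.univ u (r + 1)) := by
  classical
  have : Nonempty (Fin N) := ⟨⟨0, hN⟩⟩
  set a := orderStat Finset.univ u (r + 1) with ha
  have hk2a : 1 ≤ N - r := by omega
  have hk2b : N - r ≤ N := by omega
  constructor
  · -- lower bound
    refine le_csInf (orderStat_set_nonempty x (N - r) hk2b) ?_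
    intro t ht
    have hA : r + 1 ≤ (Finset.univ.filter fun i => u i ≤ a).card :=
      orderStat_count hN u (r + 1) (by omega) (by omega)
    have hD : N - r ≤ (Finset.univ.filter fun i => x i ≤ t).card := ht
    set A := (Finset.univ.filter fun i : Fin N => u i ≤ a)
    set D := (Finset.univ.filter fun i : Fin N => x i ≤ t)
    have hint : 0 < (A ∩ D).card := by
      have h1 : (A ∩ D).card + (A ∪ D).card = A.card + D.card :=
        Finset.card_inter_add_card_union A D
      have h2 : (A ∪ D).card ≤ N := by
        simpa using Finset.card_le_univ (A ∪ D)
      omega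
    obtain ⟨i, hi⟩ := Finset.card_pos.mp hint
    rw [Finset.mem_inter] at hi
    have hiu : u i ≤ a := (Finset.mem_filter.mp hi.1).2
    have hix : x i ≤ t := (Finset.mem_filter.mp hi.2).2
    calc (⨅ j, H j a) ≤ H i a := ciInf_le (Finite.bddBelow_range _) i
      _ ≤ H i (u i) := hH i hiu
      _ = x i := (hx i).symm
      _ ≤ t := hix
  · -- upper bound
    have hlt : (Finset.univ.filter fun i => u i < a).card < r + 1 :=
      count_lt_orderStat hN u (r + 1) (by omega) (by omega)
    have hcompl : (Finset.univ.filter fun i : Fin N => u i < a).card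
        + (Finset.univ.filter fun i : Fin N => a ≤ u i).card = N := by
      have := Finset.card_filter_add_card_filter_not
        (s := (Finset.univ : Finset (Fin N))) (p := fun i => u i < a)
      simpa [not_lt, Finset.card_fin] using this
    have hC : N - r ≤ (Finset.univ.filter fun i : Fin N => a ≤ u i).card := by omega
    have hmem : (⨆ j, H j a) ∈
        {t : ℝ | N - r ≤ (Finset.univ.filter fun i => x i ≤ t).card} := by
      refine le_trans hC (Finset.card_le_card ?_)
      intro i hi
      rw [Finset.mem_filter] at hi ⊢
      refine ⟨Finset.mem_univ i, ?_⟩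
      calc x i = H i (u i) := hx i
        _ ≤ H i a := hH i hi.2
        _ ≤ ⨆ j, H j a := le_ciSup (f := fun j => H j a) (Finite.bddAbove_range _) i
    exact csInf_le (orderStat_bddBelow hN x (N - r) hk2a) hmem
end
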